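/- If a group U ≅ Z/4 × Z/2 acts on a set of 72 elements such that every element of order 2 in U acts without fixed points, then U acts freely, and an element h of order 4 induces a permutation consisting of nine 4-cycles on the 36 orbits of an element g of order 2 with g ∉ ⟨h⟩. -/
import Mathlib


open Equiv

/-- If a group `U ≅ Z/4 × Z/2` acts on a set of `72` elements such that every element of
order `2` in `U` acts without fixed points, then `U` acts freely, and any element `h` of
order `4` induces a permutation consisting of nine `4`-cycles on the `36` orbits of any
element `g` of order `2` with `g ∉ ⟨h⟩`. (The induced permutation is encoded by any
surjection `f : X → Fin 36` whose fibers are exactly the `⟨g⟩`-orbits together with a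
permutation `τ` of `Fin 36` satisfying `f ∘ h = τ ∘ f`.) -/
theorem stmt19 (U : Type*) [Group U]
    (hU : Nonempty (U ≃* (Multiplicative (ZMod 4) × Multiplicative (ZMod 2))))
    (X : Type*) [Fintype X] [MulAction U X] (hX : Fintype.card X = 72)
    (hfpf : ∀ u : U, orderOf u = 2 → ∀ x : X, u • x ≠ x) :
    (∀ (u : U) (x : X), u • x = x → u = 1) ∧
    ∀ h g : U, orderOf h = 4 → orderOf g = 2 → g ∉ Subgroup.zpowers h →
      ∀ (f : X → Fin 36) (τ : Equiv.Perm (Fin 36)),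
        Function.Surjective f →
        (∀ x y, f x = f y ↔ (y = x ∨ y = g • x)) →
        (∀ x, f (h • x) = τ (f x)) →
        τ.cycleType = Multiset.replicate 9 4 := by
  obtain ⟨e⟩ := hU
  have comm : ∀ a b : U, a * b = b * a := fun a b =>
    e.injective (by rw [map_mul, map_mul, mul_comm])
  have hexp : ∀ u : U, u ^ 4 = 1 := fun u => by
    have h4 : ∀ p : Multiplicative (ZMod 4) × Multiplicative (ZMod 2), p ^ 4 = 1 := by decide
    apply e.injective
    rw [map_pow, map_one]
    exact h4 (e u)
  have sq_order_two : ∀ u : U, orderOf u = 4 → orderOf (u ^ 2) = 2 := by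
    intro u hu
    have hne : u ^ 2 ≠ 1 := by
      intro hc
      have := orderOf_dvd_of_pow_eq_one hc
      rw [hu] at this
      omega
    have hsq : (u ^ 2) ^ 2 = 1 := by rw [← pow_mul]; exact hexp u
    exact orderOf_eq_prime hsq hne
  have free : ∀ (u : U) (x : X), u • x = x → u = 1 := by
    intro u x hx
    by_contra hu
    have hdvd : orderOf u ∣ 2 ^ 2 := orderOf_dvd_of_pow_eq_one (hexp u)
    obtain ⟨m, hm, hord⟩ := (Nat.dvd_prime_pow Nat.prime_two).mp hdvd
    interval_cases m
    · exact hu (orderOf_eq_one_iff.mp hord)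
    · exact hfpf u (by simpa using hord) x hx
    · have h2 : orderOf (u ^ 2) = 2 := sq_order_two u (by simpa using hord)
      have : (u ^ 2) • x = x := by rw [pow_two, mul_smul, hx, hx]
      exact hfpf _ h2 x this
  refine ⟨free, ?_⟩
  intro h g hh hg hgh f τ hfsurj hf hcommf
  have key : ∀ (n : ℕ) (x : X), f ((h ^ n) • x) = (τ ^ n) (f x) := by
    intro n
    induction n with
    | zero => intro x; simp
    | succ n ih =>
      intro x
      rw [pow_succ', pow_succ', mul_smul, hcommf, ih x, Equiv.Perm.mul_apply]
  have h2ord : orderOf (h ^ 2) = 2 := sq_order_two h hh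
  have gsq : g ^ 2 = 1 := hg ▸ pow_orderOf_eq_one g
  have no2 : ∀ y : Fin 36, (τ ^ 2) y ≠ y := by
    intro y hy
    obtain ⟨x, rfl⟩ := hfsurj y
    rw [← key 2 x] at hy
    rcases (hf x ((h ^ 2) • x)).mp hy.symm with h1 | h1
    · exact hfpf _ h2ord x h1
    · have hu1 : (g * h ^ 2) • x = x := by
        rw [mul_smul, h1, ← mul_smul, ← pow_two, gsq, one_smul]
      have hune : g * h ^ 2 ≠ 1 := by
        intro hc
        apply hgh
        rw [eq_inv_of_mul_eq_one_left hc]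
        exact inv_mem (pow_mem (Subgroup.mem_zpowers h) 2)
      have husq : (g * h ^ 2) ^ 2 = 1 := by
        have hc : Commute g (h ^ 2) := comm g (h ^ 2)
        rw [hc.mul_pow, gsq, one_mul, ← pow_mul]
        exact hexp h
      exact hfpf _ (orderOf_eq_prime husq hune) x hu1
  have tau4 : τ ^ 4 = 1 := by
    ext y
    obtain ⟨x, rfl⟩ := hfsurj y
    rw [← key 4 x, ← hh, pow_orderOf_eq_one h, one_smul, Equiv.Perm.one_apply]
  have nofix : ∀ y : Fin 36, τ y ≠ y := by
    intro y hy
    exact no2 y (by rw [pow_two, Equiv.Perm.mul_apply, hy, hy])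
  -- every cycle length is 4
  have hall : ∀ n ∈ τ.cycleType, n = 4 := by
    intro n hn
    have hdvd : n ∣ 4 := by
      have := Multiset.dvd_lcm hn
      rw [Equiv.Perm.lcm_cycleType] at this
      exact this.trans (orderOf_dvd_of_pow_eq_one tau4)
    have h2le : 2 ≤ n := Equiv.Perm.two_le_of_mem_cycleType hn
    have hne2 : n ≠ 2 := by
      intro hn2
      rw [Equiv.Perm.cycleType_def, Multiset.mem_map] at hn
      obtain ⟨c, hc, hcard⟩ := hn
      have hcmem : c ∈ τ.cycleFactorsFinset := hc
      simp only [Function.comp_apply] at hcard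
      obtain ⟨x, hx⟩ := Finset.card_pos.mp (by rw [hcard, hn2]; norm_num)
      have hcyc : c = τ.cycleOf x := Equiv.Perm.cycle_is_cycleOf hx hcmem
      have hcIsCyc : c.IsCycle := (Equiv.Perm.mem_cycleFactorsFinset_iff.mp hcmem).1
      have hord : orderOf c = 2 := by rw [hcIsCyc.orderOf, hcard, hn2]
      have : (τ ^ 2) x = x := by
        rw [← Equiv.Perm.cycleOf_pow_apply_self τ x 2, ← hcyc, ← hord,
          pow_orderOf_eq_one c, Equiv.Perm.one_apply]
      exact no2 x this
    have hle : n ≤ 4 := Nat.le_of_dvd (by norm_num) hdvd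
    interval_cases n <;> omega
  have hsupp : τ.support = Finset.univ := by
    ext y
    simp [Equiv.Perm.mem_support, nofix y]
  have hsum : τ.cycleType.sum = 36 := by
    rw [Equiv.Perm.sum_cycleType, hsupp]
    simp
  have hrep := Multiset.eq_replicate_of_mem hall
  rw [hrep] at hsum ⊢
  rw [Multiset.sum_replicate, smul_eq_mul] at hsum
  congr 1
  omega
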